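/- Suppose a mixed hypergraph H = (X, C, D) admits a strict n_1-coloring c_1 = {C_1, ..., C_{n_1}} in which at least three color classes are singletons {α_1}, {α_2}, {α_3}, and admits a strict coloring c in which α_1, α_2, α_3 lie in a common color class. Then none of {α_1,α_2}, {α_1,α_3}, {α_2,α_3} is a D-edge, and merging any one of the pairs of singleton classes in c_1 yields a strict (n_1 - 1)-coloring; in particular H has at least three distinct feasible partitions into n_1 - 1 classes. -/

import Mathlib

/-- A mixed hypergraph on vertex type `V`: families of C-edges and D-edges. -/
structure MixedHypergraph (V : Type*) where
  Cedges : Set (Set V)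
  Dedges : Set (Set V)

/-- A strict `k`-coloring: a surjective coloring with `k` colors such that every
C-edge has two distinct vertices with a common color and every D-edge has two
distinct vertices with distinct colors. -/
def IsStrictColoring {V : Type*} (H : MixedHypergraph V) (k : ℕ) (f : V → Fin k) : Prop :=
  Function.Surjective f ∧
  (∀ e ∈ H.Cedges, ∃ u ∈ e, ∃ v ∈ e, u ≠ v ∧ f u = f v) ∧
  (∀ e ∈ H.Dedges, ∃ u ∈ e, ∃ v ∈ e, u ≠ v ∧ f u ≠ f v)

/-- The feasible set of a mixed hypergraph. -/
def FeasibleSet {V : Type*} (H : MixedHypergraph V) : Set ℕ :=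
  {k | ∃ f : V → Fin k, IsStrictColoring H k f}

/-- Two colorings induce the same partition of the vertex set. -/
def SamePartition {V : Type*} {k k' : ℕ} (f : V → Fin k) (g : V → Fin k') : Prop :=
  ∀ u v, f u = f v ↔ g u = g v

/-- `H` is a one-realization of `S`: its feasible set is `S` and for each `k`
the partition induced by a strict `k`-coloring is unique. -/
def IsOneRealization {V : Type*} (H : MixedHypergraph V) (S : Set ℕ) : Prop :=
  FeasibleSet H = S ∧
  ∀ (k : ℕ) (f g : V → Fin k), IsStrictColoring H k f → IsStrictColoring H k g →
    SamePartition f g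

/-- if `H` has a strict `n₁`-coloring `f` with three singleton color
classes `{α₀},{α₁},{α₂}` and a strict coloring `g` putting `α₀,α₁,α₂` in a common
class, then no pair `{αᵢ,αⱼ}` is a D-edge, merging any one of these pairs of
singleton classes yields a strict `(n₁-1)`-coloring, and merging different pairs
yields distinct feasible partitions into `n₁ - 1` classes (so there are at least
three such partitions). -/
lemma merge_aux {k : ℕ} (a b : Fin (k+1)) (hab : a ≠ b) :
    ∃ m : Fin (k+1) → Fin k, Function.Surjective m ∧
      ∀ x y, m x = m y ↔ (x = y ∨ ((x = a ∨ x = b) ∧ (y = a ∨ y = b))) := by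
  classical
  set σ := Equiv.swap b (Fin.last k) with hσ
  have hσb : σ b = Fin.last k := Equiv.swap_apply_left _ _
  set r : Fin (k+1) → Fin (k+1) := fun x => if x = b then a else x with hr
  have hrb : ∀ x, r x ≠ b := by
    intro x
    simp only [hr]
    split
    · exact hab
    · assumption
  have hσr : ∀ x, σ (r x) ≠ Fin.last k := by
    intro x h
    exact hrb x (σ.injective (h.trans hσb.symm))
  refine ⟨fun x => (σ (r x)).castPred (hσr x), ?_, ?_⟩
  · intro z
    refine ⟨σ.symm z.castSucc, ?_⟩
    have hx : σ.symm z.castSucc ≠ b := by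
      intro h
      have := congrArg σ h
      rw [Equiv.apply_symm_apply, hσb] at this
      exact (Fin.castSucc_lt_last z).ne this
    have : r (σ.symm z.castSucc) = σ.symm z.castSucc := if_neg hx
    apply Fin.castSucc_injective
    simp only [Fin.castSucc_castPred, this, Equiv.apply_symm_apply]
  · intro x y
    have key : (σ (r x)).castPred (hσr x) = (σ (r y)).castPred (hσr y) ↔ r x = r y := by
      rw [Fin.castPred_inj, σ.injective.eq_iff]
    rw [key, hr]
    by_cases hx : x = b <;> by_cases hy : y = b <;> subst_eqs <;>
      simp_all [eq_comm]

theorem three_merges (V : Type*) (H : MixedHypergraph V) (n1 : ℕ)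
    (f : V → Fin n1) (hf : IsStrictColoring H n1 f)
    (α : Fin 3 → V) (hinj : Function.Injective α)
    (hsingle : ∀ i : Fin 3, ∀ v : V, f v = f (α i) → v = α i)
    (k : ℕ) (g : V → Fin k) (hg : IsStrictColoring H k g)
    (hcommon : g (α 0) = g (α 1) ∧ g (α 1) = g (α 2)) :
    (∀ i j : Fin 3, i ≠ j → ({α i, α j} : Set V) ∉ H.Dedges) ∧
    (∀ i j : Fin 3, i ≠ j → ∃ h : V → Fin (n1 - 1),
      IsStrictColoring H (n1 - 1) h ∧
      (∀ u v : V, h u = h v ↔ (f u = f v ∨ ({u, v} : Set V) ⊆ {α i, α j}))) ∧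
    (∀ (i j i' j' : Fin 3) (h h' : V → Fin (n1 - 1)),
      i ≠ j → i' ≠ j' → ({i, j} : Finset (Fin 3)) ≠ {i', j'} →
      (∀ u v : V, h u = h v ↔ (f u = f v ∨ ({u, v} : Set V) ⊆ {α i, α j})) →
      (∀ u v : V, h' u = h' v ↔ (f u = f v ∨ ({u, v} : Set V) ⊆ {α i', α j'})) →
      ¬ SamePartition h h') := by
  obtain ⟨fsurj, fC, fD⟩ := hf
  obtain ⟨gsurj, gC, gD⟩ := hg
  -- g is constant on the α's
  have gc : ∀ i : Fin 3, g (α i) = g (α 0) := by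
    intro i
    fin_cases i
    · rfl
    · exact hcommon.1.symm
    · exact (hcommon.1.trans hcommon.2).symm
  -- f separates the α's
  have hfij : ∀ i j : Fin 3, i ≠ j → f (α i) ≠ f (α j) := by
    intro i j hij h
    exact hij (hinj (hsingle j (α i) h))
  -- Part 1
  have part1 : ∀ i j : Fin 3, i ≠ j → ({α i, α j} : Set V) ∉ H.Dedges := by
    intro i j hij hD
    obtain ⟨u, hu, v, hv, huv, hne⟩ := gD _ hD
    apply hne
    rcases hu with hu | hu <;> rcases hv with hv | hv <;> subst hu <;> subst hv <;>
      exact (gc _).trans (gc _).symm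
  -- Part 2
  have hn : n1 - 1 + 1 = n1 := Nat.succ_pred_eq_of_pos (f (α 0)).pos
  have part2 : ∀ i j : Fin 3, i ≠ j → ∃ h : V → Fin (n1 - 1),
      IsStrictColoring H (n1 - 1) h ∧
      (∀ u v : V, h u = h v ↔ (f u = f v ∨ ({u, v} : Set V) ⊆ {α i, α j})) := by
    intro i j hij
    set f' : V → Fin (n1 - 1 + 1) := fun v => Fin.cast hn.symm (f v) with hf'
    have hf'inj : ∀ u v, f' u = f' v ↔ f u = f v := by
      intro u v
      simp [hf', Fin.ext_iff]
    have hf'surj : Function.Surjective f' := by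
      intro z
      obtain ⟨v, hv⟩ := fsurj (Fin.cast hn z)
      exact ⟨v, by simp [hf', hv]⟩
    obtain ⟨m, msurj, miff⟩ := merge_aux (f' (α i)) (f' (α j))
      (fun h => hfij i j hij ((hf'inj _ _).mp h))
    have hmemb : ∀ w, f w = f (α i) ∨ f w = f (α j) → w ∈ ({α i, α j} : Set V) := by
      rintro w (hw | hw)
      · exact Or.inl (hsingle i w hw)
      · exact Or.inr (hsingle j w hw)
    refine ⟨fun v => m (f' v), ?_, ?_⟩
    rotate_left
    · -- partition characterization
      intro u v
      rw [miff, hf'inj, hf'inj, hf'inj, hf'inj, hf'inj]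
      constructor
      · rintro (h | ⟨hu', hv'⟩)
        · exact Or.inl h
        · exact Or.inr (Set.pair_subset_iff.mpr ⟨hmemb u hu', hmemb v hv'⟩)
      · rintro (h | hsub)
        · exact Or.inl h
        · rw [Set.pair_subset_iff] at hsub
          obtain ⟨hu, hv⟩ := hsub
          simp only [Set.mem_insert_iff, Set.mem_singleton_iff] at hu hv
          refine Or.inr ⟨?_, ?_⟩
          · rcases hu with hu | hu <;> subst hu <;> simp
          · rcases hv with hv | hv <;> subst hv <;> simp
    · refine ⟨msurj.comp hf'surj, ?_, ?_⟩
      · intro e he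
        obtain ⟨u, hu, v, hv, huv, hfe⟩ := fC e he
        exact ⟨u, hu, v, hv, huv, by rw [hf'] ; simp [hfe]⟩
      · intro e he
        by_contra hcon
        push_neg at hcon
        -- h is constant on e
        have hconst : ∀ u ∈ e, ∀ v ∈ e, m (f' u) = m (f' v) := by
          intro u hu v hv
          by_cases huv : u = v
          · rw [huv]
          · exact hcon u hu v hv huv
        obtain ⟨u, hu, v, hv, huv, hfe⟩ := fD e he
        have h1 := (miff (f' u) (f' v)).mp (hconst u hu v hv)
        rw [hf'inj, hf'inj, hf'inj, hf'inj, hf'inj] at h1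
        rcases h1 with h1 | ⟨h1u, h1v⟩
        · exact hfe h1
        · -- u, v ∈ {α i, α j}, u ≠ v, so e ⊇ {α i, α j}; show e = {α i, α j}
          have hmem : ∀ w ∈ e, w = α i ∨ w = α j := by
            intro w hw
            have h2 := (miff (f' w) (f' u)).mp (hconst w hw u hu)
            rw [hf'inj, hf'inj, hf'inj, hf'inj, hf'inj] at h2
            rcases h2 with h2 | ⟨h2w, _⟩
            · rcases h1u with h1u | h1u
              · exact Or.inl (hsingle i w (h2.trans h1u))
              · exact Or.inr (hsingle j w (h2.trans h1u))
            · rcases h2w with h2w | h2w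
              · exact Or.inl (hsingle i w h2w)
              · exact Or.inr (hsingle j w h2w)
          have heq : e = ({α i, α j} : Set V) := by
            apply Set.eq_of_subset_of_subset
            · intro w hw
              rcases hmem w hw with h | h <;> simp [h]
            · intro w hw
              have hui : u = α i ∨ u = α j := by
                rcases h1u with h1u | h1u
                · exact Or.inl (hsingle i u h1u)
                · exact Or.inr (hsingle j u h1u)
              have hvi : v = α i ∨ v = α j := by
                rcases h1v with h1v | h1v
                · exact Or.inl (hsingle i v h1v)
                · exact Or.inr (hsingle j v h1v)
              simp only [Set.mem_insert_iff, Set.mem_singleton_iff] at hw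
              rcases hui with hui | hui <;> rcases hvi with hvi | hvi <;>
                rcases hw with hw | hw <;> subst_eqs <;> first
                | exact hu | exact hv | exact absurd rfl huv
          exact part1 i j hij (heq ▸ he)
  refine ⟨part1, part2, ?_⟩
  -- Part 3
  intro i j i' j' h h' hij hij' hne hspec hspec' hsame
  have hh : h (α i) = h (α j) := by
    rw [hspec]
    exact Or.inr (by intro w hw; exact hw)
  have hh' := (hsame (α i) (α j)).mp hh
  rw [hspec'] at hh'
  rcases hh' with hh' | hsub
  · exact hfij i j hij hh'
  · rw [Set.pair_subset_iff] at hsub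
    obtain ⟨hu, hv⟩ := hsub
    simp only [Set.mem_insert_iff, Set.mem_singleton_iff, hinj.eq_iff] at hu hv
    apply hne
    rcases hu with hu | hu <;> rcases hv with hv | hv <;> subst_eqs
    · exact absurd rfl hij
    · rfl
    · exact Finset.pair_comm _ _
    · exact absurd rfl hij
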